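/- For an integer N ≥ 1 and a function g : {0,1}^N → ℝ, define for each n ∈ {1,…,N} the sequential bargaining payoff π_n(g) := 2^{-(N-n+1)} · Σ_{I ∈ {0,1}^{N-n}} ( g(1^{n-1}, 1, I) − g(1^{n-1}, 0, I) ), where (1^{n-1}, b, I) denotes the vector whose first n−1 coordinates equal 1, whose n-th coordinate equals b, and whose last N−n coordinates are given by I. For a permutation σ of {1,…,N} let g_σ : {0,1}^N → ℝ be defined by g_σ(I_1,…,I_N) := g(I_{σ(1)},…,I_{σ(N)}). Then Σ_{n=1}^N π_n(g_σ) = Σ_{n=1}^N π_n(g); equivalently, the MNO's payoff g(1,…,1) − Σ_{n=1}^N π_n(g) is invariant under any reordering of the APOs in the bargaining sequence. (Invariance to APO-order changing.) -/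

import Mathlib

/-- The agreement vector `(1^{n-1}, b, I)` (in 1-indexed notation). -/
def extendVec {N : ℕ} (n : ℕ) (b : Bool) (I : Fin (N - n) → Bool) :
    Fin N → Bool :=
  fun i =>
    if i.val < n - 1 then true
    else if i.val = n - 1 then b
    else if h : i.val - n < N - n then I ⟨i.val - n, h⟩ else true

/-- APO `n`'s payoff in the sequential bargaining (1-indexed). -/
noncomputable def seqPayoff {N : ℕ} (g : (Fin N → Bool) → ℝ) (n : ℕ) : ℝ :=
  (∑ I : Fin (N - n) → Bool,
    (g (extendVec n true I) - g (extendVec n false I))) / 2 ^ (N - n + 1)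

/-- The all-ones extension `(1^n, I)`. -/
def onesExt {N n : ℕ} (I : Fin (N - n) → Bool) : Fin N → Bool :=
  fun i => if h : n ≤ i.val then I ⟨i.val - n, by have := i.isLt; omega⟩ else true

/-- Average of `g` over vectors whose first `k` coordinates are `1`. -/
noncomputable def avgOnes {N : ℕ} (g : (Fin N → Bool) → ℝ) (k : ℕ) : ℝ :=
  (∑ I : Fin (N - k) → Bool, g (onesExt I)) / 2 ^ (N - k)

lemma extendVec_true_eq_onesExt {N n : ℕ} (hn : 1 ≤ n) (I : Fin (N - n) → Bool) :
    extendVec n true I = onesExt I := by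
  funext i
  have hi := i.isLt
  simp only [extendVec, onesExt]
  by_cases h1 : i.val < n - 1
  · rw [if_pos h1, dif_neg (by omega)]
  · rw [if_neg h1]
    by_cases h2 : i.val = n - 1
    · rw [if_pos h2, dif_neg (by omega)]
    · rw [if_neg h2, dif_pos (by omega), dif_pos (by omega)]

lemma key_step {N n : ℕ} (hn : 1 ≤ n) (hN : n ≤ N) (g : (Fin N → Bool) → ℝ) :
    seqPayoff g n = avgOnes g n - avgOnes g (n - 1) := by
  have hsub : N - (n - 1) = (N - n) + 1 := by omega
  -- rewrite the sum defining `avgOnes g (n-1)` as a sum over `Bool × (Fin (N-n) → Bool)`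
  have hsplit : ∑ I : Fin (N - (n - 1)) → Bool, g (onesExt I)
      = (∑ I : Fin (N - n) → Bool, g (extendVec n true I))
        + (∑ I : Fin (N - n) → Bool, g (extendVec n false I)) := by
    have hkey := Fintype.sum_equiv
        (((Fin.consEquiv (fun _ : Fin ((N - n) + 1) => Bool)).trans
          (Equiv.arrowCongr (finCongr hsub.symm) (Equiv.refl Bool))) :
          (Bool × (Fin (N - n) → Bool)) ≃ (Fin (N - (n - 1)) → Bool))
        (fun p : Bool × (Fin (N - n) → Bool) => g (extendVec n p.1 p.2))
        (fun I => g (onesExt I)) ?_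
    · rw [← hkey, Fintype.sum_prod_type]
      simp [Fintype.sum_sum_type]
    · rintro ⟨b, I⟩
      show g (extendVec n b I)
          = g (onesExt (n := n - 1) (fun x : Fin (N - (n - 1)) => Fin.cons (α := fun _ => Bool) b I (finCongr hsub x)))
      congr 1
      funext i
      have hi := i.isLt
      simp only [extendVec, onesExt]
      by_cases h1 : i.val < n - 1
      · rw [if_pos h1, dif_neg (by omega)]
      · rw [if_neg h1]
        by_cases h2 : i.val = n - 1
        · rw [if_pos h2, dif_pos (by omega)]
          have : (finCongr hsub ⟨i.val - (n - 1), by omega⟩ : Fin ((N - n) + 1)) = 0 := by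
            apply Fin.ext; simp; omega
          rw [this, Fin.cons_zero]
        · rw [if_neg h2, dif_pos (by omega), dif_pos (by omega)]
          have : (finCongr hsub ⟨i.val - (n - 1), by omega⟩ : Fin ((N - n) + 1))
              = Fin.succ ⟨i.val - n, by omega⟩ := by
            apply Fin.ext; simp [Fin.succ]; omega
          rw [this, Fin.cons_succ]
  have hT : avgOnes g n = (∑ I : Fin (N - n) → Bool, g (extendVec n true I)) / 2 ^ (N - n) := by
    unfold avgOnes
    congr 1
    exact Fintype.sum_congr _ _ fun I => by rw [extendVec_true_eq_onesExt hn]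
  have hF : avgOnes g (n - 1)
      = ((∑ I : Fin (N - n) → Bool, g (extendVec n true I))
        + (∑ I : Fin (N - n) → Bool, g (extendVec n false I))) / 2 ^ ((N - n) + 1) := by
    unfold avgOnes
    rw [hsplit, hsub]
  rw [hT, hF]
  unfold seqPayoff
  rw [Finset.sum_sub_distrib]
  have h2 : (2 : ℝ) ^ ((N - n) + 1) = 2 ^ (N - n) * 2 := by ring
  rw [h2]
  have hpos : (2 : ℝ) ^ (N - n) ≠ 0 := by positivity
  field_simp
  ring

lemma total_payoff {N : ℕ} (g : (Fin N → Bool) → ℝ) :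
    ∑ n ∈ Finset.Icc 1 N, seqPayoff g n = avgOnes g N - avgOnes g 0 := by
  have : ∑ n ∈ Finset.Icc 1 N, seqPayoff g n
      = ∑ i ∈ Finset.range N, (avgOnes g (i + 1) - avgOnes g i) := by
    apply Finset.sum_nbij' (fun n => n - 1) (fun i => i + 1)
    · intro n hn; simp at hn ⊢; omega
    · intro i hi; simp at hi ⊢; omega
    · intro n hn; simp at hn ⊢; omega
    · intro i hi; simp
    · intro n hn
      simp at hn
      rw [key_step (by omega) (by omega)]
      congr 2
      omega
  rw [this, Finset.sum_range_sub (avgOnes g)]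

lemma avgOnes_N {N : ℕ} (g : (Fin N → Bool) → ℝ) :
    avgOnes g N = g (fun _ => true) := by
  unfold avgOnes
  rw [Finset.sum_congr rfl (fun I _ => show g (onesExt I) = g (fun _ => true) from
    congrArg g (funext fun i => by
      simp only [onesExt]
      rw [dif_neg (by have := i.isLt; omega)]))]
  rw [Finset.sum_const, Finset.card_univ, Fintype.card_fun, nsmul_eq_mul]
  have hpos : (2 : ℝ) ^ (N - N) ≠ 0 := by positivity
  push_cast
  simp only [Fintype.card_fin, Fintype.card_bool]
  field_simp
  push_cast
  ring

theorem MNO_payoff_order_invariant {N : ℕ} (hN : 1 ≤ N)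
    (g : (Fin N → Bool) → ℝ) (σ : Equiv.Perm (Fin N)) :
    ∑ n ∈ Finset.Icc 1 N, seqPayoff (fun I => g (fun i => I (σ i))) n
      = ∑ n ∈ Finset.Icc 1 N, seqPayoff g n := by
  rw [total_payoff, total_payoff, avgOnes_N, avgOnes_N]
  congr 1
  unfold avgOnes
  congr 1
  apply Fintype.sum_equiv (Equiv.arrowCongr (σ.symm : Fin N ≃ Fin N) (Equiv.refl Bool))
  intro I
  refine congrArg g (funext fun i => ?_)
  have hi := i.isLt
  simp only [onesExt, Equiv.arrowCongr_apply, Equiv.refl_apply, Function.comp_apply,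
    Equiv.symm_symm, Function.comp]
  rw [dif_pos (Nat.zero_le _), dif_pos (Nat.zero_le _)]
  show I ⟨(σ i).val - 0, by have := (σ i).isLt; omega⟩ = I (σ ⟨i.val - 0, by omega⟩)
  have h1 : (⟨i.val - 0, by omega⟩ : Fin N) = i := Fin.ext (Nat.sub_zero _)
  rw [h1]
  exact congrArg I (Fin.ext (Nat.sub_zero _))
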